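/- Let g ∈ Aut(ℚ, ≤) be such that for every x ∈ ℚ there exists y < x with g y > y and there exists z > x with g z > z. Then there exists h ∈ Aut(ℚ, ≤) such that the automorphism g ∘ h⁻¹ ∘ g ∘ h has a single +-orbital. -/

import Mathlib

/-- The automorphism group of `(ℚ, ≤)`, as a subgroup of `Equiv.Perm ℚ`. -/
def QAut : Subgroup (Equiv.Perm ℚ) where
  carrier := {g | ∀ a b : ℚ, a ≤ b ↔ g a ≤ g b}
  one_mem' := fun _ _ => Iff.rfl
  mul_mem' := by
    intro g h hg hh a b
    exact (hh a b).trans (hg (h a) (h b))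
  inv_mem' := by
    intro g hg a b
    simpa using (hg (g⁻¹ a) (g⁻¹ b)).symm

/-- `f` has a single `+`-orbital: there is `a` with `a < f a` whose orbit
`{f^k a : k ∈ ℤ}` is unbounded above and below in `ℚ`. -/
def SinglePlusQ (f : Equiv.Perm ℚ) : Prop :=
  ∃ a : ℚ, a < f a ∧ (∀ x : ℚ, ∃ k : ℤ, x < (f ^ k) a) ∧ (∀ x : ℚ, ∃ k : ℤ, (f ^ k) a < x)

/-- `f` has a single `−`-orbital: there is `a` with `f a < a` whose orbit
`{f^k a : k ∈ ℤ}` is unbounded above and below in `ℚ`. -/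
def SingleMinusQ (f : Equiv.Perm ℚ) : Prop :=
  ∃ a : ℚ, f a < a ∧ (∀ x : ℚ, ∃ k : ℤ, x < (f ^ k) a) ∧ (∀ x : ℚ, ∃ k : ℤ, (f ^ k) a < x)

/-- `f` has a `+`-orbital unbounded above. -/
def PlusUnbAboveQ (f : Equiv.Perm ℚ) : Prop :=
  ∃ a : ℚ, a < f a ∧ ∀ x : ℚ, ∃ k : ℤ, x < (f ^ k) a

/-- `f` has a `−`-orbital unbounded below. -/
def MinusUnbBelowQ (f : Equiv.Perm ℚ) : Prop :=
  ∃ b : ℚ, f b < b ∧ ∀ x : ℚ, ∃ k : ℤ, (f ^ k) b < x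

section Stmt6Aux

-- index existence
lemma idx_exists (u : ℤ → ℚ) (hu : StrictMono u) (hua : ∀ x, ∃ n, x < u n)
    (hub : ∀ x, ∃ n, u n < x) (x : ℚ) : ∃ n, u n ≤ x ∧ x < u (n + 1) := by
  obtain ⟨n0, hn0⟩ := hub x
  have hbdd : ∃ b, ∀ z : ℤ, x < u z → b ≤ z := by
    refine ⟨n0, fun z hz => ?_⟩
    by_contra hlt
    exact absurd (hu (by omega : z < n0)) (by linarith)
  obtain ⟨lb, hlb, hmin⟩ := Int.exists_least_of_bdd hbdd (hua x)
  refine ⟨lb - 1, ?_, by simpa using hlb⟩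
  by_contra hh
  push_neg at hh
  have := hmin _ hh
  omega

lemma idx_unique (u : ℤ → ℚ) (hu : StrictMono u) {x : ℚ} {n m : ℤ}
    (h1 : u n ≤ x) (h2 : x < u (n + 1)) (h3 : u m ≤ x) (h4 : x < u (m + 1)) : n = m := by
  by_contra hne
  rcases lt_or_gt_of_ne hne with hlt | hlt
  · exact absurd (hu.monotone (by omega : n + 1 ≤ m)) (by linarith)
  · exact absurd (hu.monotone (by omega : m + 1 ≤ n)) (by linarith)

noncomputable def pwF (s t : ℤ → ℚ) (I : ℚ → ℤ) (x : ℚ) : ℚ :=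
  t (I x) + (x - s (I x)) * ((t (I x + 1) - t (I x)) / (s (I x + 1) - s (I x)))

section pw
variable {s t : ℤ → ℚ} {I : ℚ → ℤ}
variable (hs : StrictMono s) (ht : StrictMono t)
variable (hI1 : ∀ x, s (I x) ≤ x) (hI2 : ∀ x, x < s (I x + 1))

include hs ht hI1 hI2 in
lemma pwF_mem (x : ℚ) : t (I x) ≤ pwF s t I x ∧ pwF s t I x < t (I x + 1) := by
  set n := I x with hn
  have hd : (0:ℚ) < s (n + 1) - s n := by have := hs (by omega : n < n + 1); linarith
  have hnum : (0:ℚ) < t (n + 1) - t n := by have := ht (by omega : n < n + 1); linarith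
  have hσ : (0:ℚ) < (t (n + 1) - t n) / (s (n + 1) - s n) := div_pos hnum hd
  constructor
  · have : (0:ℚ) ≤ (x - s n) * ((t (n + 1) - t n) / (s (n + 1) - s n)) :=
      mul_nonneg (by have := hI1 x; linarith) hσ.le
    unfold pwF; linarith
  · have hlt : (x - s n) * ((t (n + 1) - t n) / (s (n + 1) - s n)) <
        (s (n + 1) - s n) * ((t (n + 1) - t n) / (s (n + 1) - s n)) := by
      apply mul_lt_mul_of_pos_right _ hσ
      have := hI2 x; linarith
    have heq : (s (n + 1) - s n) * ((t (n + 1) - t n) / (s (n + 1) - s n)) = t (n + 1) - t n := by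
      field_simp
    unfold pwF; linarith

include hs ht hI1 hI2 in
lemma pwF_mono : StrictMono (pwF s t I) := by
  intro x y hxy
  have hbx := pwF_mem hs ht hI1 hI2 x
  have hby := pwF_mem hs ht hI1 hI2 y
  have hle : I x ≤ I y := by
    by_contra hh
    push_neg at hh
    have : s (I y + 1) ≤ s (I x) := hs.monotone (by omega)
    have := hI1 x; have := hI2 y; linarith
  rcases eq_or_lt_of_le hle with heq | hlt
  · unfold pwF
    rw [heq]
    have hd : (0:ℚ) < s (I y + 1) - s (I y) := by have := hs (by omega : I y < I y + 1); linarith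
    have hnum : (0:ℚ) < t (I y + 1) - t (I y) := by have := ht (by omega : I y < I y + 1); linarith
    have hσ : (0:ℚ) < (t (I y + 1) - t (I y)) / (s (I y + 1) - s (I y)) := div_pos hnum hd
    have := mul_lt_mul_of_pos_right (by linarith : x - s (I y) < y - s (I y)) hσ
    linarith
  · have : t (I x + 1) ≤ t (I y) := ht.monotone (by omega)
    linarith [hbx.2, hby.1]

include hs ht hI1 hI2 in
lemma pwF_eval (n : ℤ) : pwF s t I (s n) = t n := by
  have h1 := hI1 (s n)
  have h2 := hI2 (s n)
  have : I (s n) = n := idx_unique s hs h1 h2 le_rfl (hs (by omega : n < n + 1))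
  unfold pwF
  rw [this]
  ring

variable {J : ℚ → ℤ} (hJ1 : ∀ y, t (J y) ≤ y) (hJ2 : ∀ y, y < t (J y + 1))

include hs ht hI1 hI2 hJ1 hJ2 in
lemma pwF_inv (x : ℚ) : pwF t s J (pwF s t I x) = x := by
  set n := I x with hn
  have hb := pwF_mem hs ht hI1 hI2 x
  set y := pwF s t I x with hy
  have hJeq : J y = n := idx_unique t ht (hJ1 _) (hJ2 _) hb.1 hb.2
  have hd : s (n + 1) - s n ≠ 0 := by have := hs (by omega : n < n + 1); linarith
  have hnum : t (n + 1) - t n ≠ 0 := by have := ht (by omega : n < n + 1); linarith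
  show pwF t s J y = x
  unfold pwF
  rw [hJeq]
  rw [hy]
  unfold pwF
  rw [← hn]
  field_simp
  ring

end pw

lemma ext_lemma (s t : ℤ → ℚ) (hs : StrictMono s) (ht : StrictMono t)
    (hsa : ∀ x, ∃ n, x < s n) (hsb : ∀ x, ∃ n, s n < x)
    (hta : ∀ x, ∃ n, x < t n) (htb : ∀ x, ∃ n, t n < x) :
    ∃ h : QAut, ∀ n, (h : Equiv.Perm ℚ) (s n) = t n := by
  choose I hI1 hI2 using idx_exists s hs hsa hsb
  choose J hJ1 hJ2 using idx_exists t ht hta htb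
  have hmono := pwF_mono hs ht hI1 hI2
  refine ⟨⟨⟨pwF s t I, pwF t s J,
      fun x => pwF_inv hs ht hI1 hI2 hJ1 hJ2 x,
      fun y => pwF_inv ht hs hJ1 hJ2 hI1 hI2 y⟩,
    fun a b => ?_⟩, fun n => pwF_eval hs ht hI1 hI2 n⟩
  exact (StrictMono.le_iff_le hmono).symm

lemma QAut.lt_iff (g : QAut) (a b : ℚ) :
    a < b ↔ (g : Equiv.Perm ℚ) a < (g : Equiv.Perm ℚ) b := by
  have h := g.2
  constructor
  · intro hab
    rcases lt_or_ge ((g:Equiv.Perm ℚ) a) ((g:Equiv.Perm ℚ) b) with h'|h'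
    · exact h'
    · exact absurd ((h b a).2 h') (not_le.2 hab)
  · intro hab
    rcases lt_or_ge a b with h'|h'
    · exact h'
    · exact absurd ((h b a).1 h') (not_le.2 hab)

-- the c-sequence
lemma seq_exists (g : QAut)
    (hg : ∀ x : ℚ, (∃ y, y < x ∧ y < (g : Equiv.Perm ℚ) y) ∧
      (∃ z, x < z ∧ z < (g : Equiv.Perm ℚ) z)) :
    ∃ c : ℤ → ℚ, (∀ n, c n < (g : Equiv.Perm ℚ) (c n)) ∧
      (∀ n, (g : Equiv.Perm ℚ) (c n) < c (n + 1)) ∧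
      (∀ x : ℚ, ∃ n, x < c n) ∧ (∀ x : ℚ, ∃ n, c n < x) := by
  set gE : Equiv.Perm ℚ := (g : Equiv.Perm ℚ) with hgE
  choose up hup1 hup2 using fun x => (hg x).2
  choose dn hdn1 hdn2 using fun x => (hg x).1
  -- upward sequence
  let p : ℕ → ℚ := fun k => Nat.rec (up 0) (fun k pk => up (max (gE pk) (k + 1 : ℚ))) k
  have hps : ∀ k, gE (p k) < p (k + 1) := fun k =>
    lt_of_le_of_lt (le_max_left _ _) (hup1 _)
  have hpS : ∀ k, p k < gE (p k) := by
    intro k; cases k with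
    | zero => exact hup2 0
    | succ k => exact hup2 _
  have hpb : ∀ k : ℕ, (k + 1 : ℚ) < p (k + 1) := fun k =>
    lt_of_le_of_lt (le_max_right _ _) (hup1 _)
  -- downward sequence
  let q : ℕ → ℚ := fun k => Nat.rec (p 0) (fun k qk => dn (min (gE.symm qk) (-(k + 1) : ℚ))) k
  have hqs : ∀ k, gE (q (k + 1)) < q k := by
    intro k
    have h1 : q (k + 1) < gE.symm (q k) :=
      lt_of_lt_of_le (hdn1 _) (min_le_left _ _)
    have := (QAut.lt_iff g (q (k+1)) (gE.symm (q k))).1 h1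
    simpa [hgE] using this
  have hqS : ∀ k, q k < gE (q k) := by
    intro k; cases k with
    | zero => exact hpS 0
    | succ k => exact hdn2 _
  have hqb : ∀ k : ℕ, q (k + 1) < (-(k + 1) : ℚ) :=
    fun k => lt_of_lt_of_le (hdn1 _) (min_le_right _ _)
  -- glue
  refine ⟨fun n => if 0 ≤ n then p n.toNat else q (-n).toNat, ?_, ?_, ?_, ?_⟩
  · intro n
    by_cases hn : 0 ≤ n
    · simp only [hn, if_pos]; exact hpS _
    · simp only [hn, if_neg, if_false]; exact hqS _
  · intro n
    by_cases hn : 0 ≤ n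
    · have hn1 : (0:ℤ) ≤ n + 1 := by omega
      have ht : (n + 1).toNat = n.toNat + 1 := by omega
      simp only [hn, hn1, if_pos, ht]
      exact hps _
    · by_cases hn1 : 0 ≤ n + 1
      · -- n = -1
        have hne : n = -1 := by omega
        subst hne
        simp only [show ¬ (0:ℤ) ≤ -1 by omega, if_neg, if_false,
          show (0:ℤ) ≤ -1 + 1 by omega, if_pos]
        have : ((-(-1):ℤ)).toNat = 1 := by omega
        rw [this]
        have := hqs 0
        have h0 : q 0 = p 0 := rfl
        simpa [h0] using this
      · have ht : (-n).toNat = (-(n+1)).toNat + 1 := by omega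
        simp only [hn, hn1, if_neg, if_false, ht]
        exact hqs _
  · intro x
    obtain ⟨m, hm⟩ := exists_nat_gt x
    refine ⟨(m : ℤ) + 1, ?_⟩
    have h0 : (0:ℤ) ≤ (m:ℤ) + 1 := by omega
    simp only [h0, if_pos]
    have ht : ((m:ℤ) + 1).toNat = m + 1 := by omega
    rw [ht]
    calc x < m := hm
      _ ≤ (m:ℚ) + 1 := by linarith
      _ < p (m + 1) := by exact_mod_cast hpb m
  · intro x
    obtain ⟨m, hm⟩ := exists_nat_gt (-x)
    refine ⟨-((m : ℤ) + 1), ?_⟩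
    have h0 : ¬ (0:ℤ) ≤ -((m:ℤ) + 1) := by omega
    simp only [h0, if_neg, if_false]
    have ht : (-(-((m:ℤ) + 1))).toNat = m + 1 := by omega
    rw [ht]
    calc q (m + 1) < -((m:ℚ) + 1) := hqb m
      _ ≤ -(m:ℚ) := by linarith
      _ < x := by linarith

end Stmt6Aux

/-- If `g ∈ Aut(ℚ, ≤)` is such that every `x` has some `y < x` with
`g y > y` and some `z > x` with `g z > z`, then there is `h ∈ Aut(ℚ, ≤)` such that
`g ∘ h⁻¹ ∘ g ∘ h` has a single `+`-orbital. -/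


theorem stmt6 (g : QAut)
    (hg : ∀ x : ℚ, (∃ y, y < x ∧ y < (g : Equiv.Perm ℚ) y) ∧
      (∃ z, x < z ∧ z < (g : Equiv.Perm ℚ) z)) :
    ∃ h : QAut, SinglePlusQ ((g * h⁻¹ * g * h : QAut) : Equiv.Perm ℚ) := by
  classical
  set gE : Equiv.Perm ℚ := (g : Equiv.Perm ℚ) with hgE
  obtain ⟨c, hcS, hcStep, hca, hcb⟩ := seq_exists g hg
  have hcadj : ∀ n, c n < c (n + 1) := fun n => (hcS n).trans (hcStep n)
  have hcmono : StrictMono c := strictMono_int_of_lt_succ hcadj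
  -- merged sequences
  set s : ℤ → ℚ := fun n => if n % 2 = 0 then c (n / 2) else gE.symm (c (n / 2 + 1)) with hsdef
  set t : ℤ → ℚ := fun n => if n % 2 = 0 then c n else (c (n - 1) + gE (c (n - 1))) / 2 with htdef
  have hs_even : ∀ k : ℤ, s (2 * k) = c k := by
    intro k; simp only [hsdef]
    rw [if_pos (by omega), show (2*k)/2 = k by omega]
  have hs_odd : ∀ k : ℤ, s (2 * k + 1) = gE.symm (c (k + 1)) := by
    intro k; simp only [hsdef]
    rw [if_neg (by omega), show (2*k+1)/2 = k by omega]
  have ht_even : ∀ k : ℤ, t (2 * k) = c (2 * k) := by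
    intro k; simp only [htdef]; rw [if_pos (by omega)]
  have ht_odd : ∀ k : ℤ, t (2 * k + 1) = (c (2 * k) + gE (c (2 * k))) / 2 := by
    intro k; simp only [htdef]
    rw [if_neg (by omega), show (2*k+1-1) = 2*k by ring]
  -- gE.symm of c (k+1)
  have hsymm_lt : ∀ k : ℤ, gE.symm (c (k + 1)) < c (k + 1) := by
    intro k
    have := (QAut.lt_iff g (gE.symm (c (k+1))) (c (k+1))).2 (by simpa [hgE] using hcS (k+1))
    exact this
  have hsymm_gt : ∀ k : ℤ, c k < gE.symm (c (k + 1)) := by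
    intro k
    have := (QAut.lt_iff g (c k) (gE.symm (c (k+1)))).2 (by simpa [hgE] using hcStep k)
    exact this
  have hsadj : ∀ n : ℤ, s n < s (n + 1) := by
    intro n
    obtain ⟨k, hk⟩ : ∃ k, n = 2 * k ∨ n = 2 * k + 1 := ⟨n / 2, by omega⟩
    rcases hk with rfl | rfl
    · rw [hs_even, hs_odd]; exact hsymm_gt k
    · rw [hs_odd, show 2*k+1+1 = 2*(k+1) by ring, hs_even]; exact hsymm_lt k
  have htadj : ∀ n : ℤ, t n < t (n + 1) := by
    intro n
    obtain ⟨k, hk⟩ : ∃ k, n = 2 * k ∨ n = 2 * k + 1 := ⟨n / 2, by omega⟩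
    rcases hk with rfl | rfl
    · rw [ht_even, ht_odd]; have := hcS (2*k); linarith
    · rw [ht_odd, show 2*k+1+1 = 2*(k+1) by ring, ht_even]
      have h1 := hcStep (2*k)
      have h2 := hcadj (2*k+1)
      have h3 := hcS (2*k)
      have : (2:ℤ)*(k+1) = 2*k+1+1 := by ring
      rw [this]
      linarith
  have hsmono := strictMono_int_of_lt_succ hsadj
  have htmono := strictMono_int_of_lt_succ htadj
  have hsa : ∀ x : ℚ, ∃ n, x < s n := by
    intro x
    obtain ⟨m, hm⟩ := hca x
    refine ⟨2 * max m 0, ?_⟩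
    rw [hs_even]
    exact hm.trans_le (hcmono.monotone (le_max_left _ _))
  have hsb : ∀ x : ℚ, ∃ n, s n < x := by
    intro x
    obtain ⟨m, hm⟩ := hcb x
    refine ⟨2 * min m 0, ?_⟩
    rw [hs_even]
    exact lt_of_le_of_lt (hcmono.monotone (min_le_left _ _)) hm
  have hta : ∀ x : ℚ, ∃ n, x < t n := by
    intro x
    obtain ⟨m, hm⟩ := hca x
    refine ⟨2 * max m 0, ?_⟩
    rw [ht_even]
    exact hm.trans_le (hcmono.monotone (by omega : m ≤ 2 * max m 0))
  have htb : ∀ x : ℚ, ∃ n, t n < x := by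
    intro x
    obtain ⟨m, hm⟩ := hcb x
    refine ⟨2 * min m 0, ?_⟩
    rw [ht_even]
    exact lt_of_le_of_lt (hcmono.monotone (by omega : 2 * min m 0 ≤ m)) hm
  obtain ⟨h, hEval⟩ := ext_lemma s t hsmono htmono hsa hsb hta htb
  set hE : Equiv.Perm ℚ := (h : Equiv.Perm ℚ) with hhE
  refine ⟨h, ?_⟩
  set f : QAut := g * h⁻¹ * g * h with hfdef
  set fE : Equiv.Perm ℚ := (f : Equiv.Perm ℚ) with hfE
  have hfapp : ∀ x, fE x = gE (hE⁻¹ (gE (hE x))) := by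
    intro x
    simp only [hfE, hfdef, Subgroup.coe_mul, hgE, hhE, Equiv.Perm.mul_apply]
    norm_cast
  -- key step
  have hkey : ∀ n : ℤ, c (n + 1) < fE (c n) := by
    intro n
    have h1 : hE (c n) = c (2 * n) := by
      have := hEval (2 * n); rw [hs_even, ht_even] at this; exact this
    have h2 : hE (gE.symm (c (n + 1))) = (c (2 * n) + gE (c (2 * n))) / 2 := by
      have := hEval (2 * n + 1); rw [hs_odd, ht_odd] at this; exact this
    have h3 : hE (gE.symm (c (n + 1))) < gE (hE (c n)) := by
      rw [h1, h2]
      have := hcS (2 * n)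
      linarith
    have h4 : gE.symm (c (n + 1)) < hE⁻¹ (gE (hE (c n))) := by
      have := (QAut.lt_iff h⁻¹ (hE (gE.symm (c (n+1)))) (gE (hE (c n)))).1 h3
      simpa [hhE] using this
    have h5 := (QAut.lt_iff g (gE.symm (c (n+1))) (hE⁻¹ (gE (hE (c n))))).1 h4
    rw [hfapp]
    simpa [hgE] using h5
  have hf2 := f.2
  have hfmono : ∀ a b : ℚ, a ≤ b → fE a ≤ fE b := fun a b hab => (hf2 a b).1 hab
  have hfinvmono : ∀ a b : ℚ, a ≤ b → fE⁻¹ a ≤ fE⁻¹ b := by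
    intro a b hab
    have := f⁻¹.2
    exact (this a b).1 hab
  -- forward orbit
  have claim1 : ∀ k : ℕ, c k ≤ (fE ^ k) (c 0) := by
    intro k
    induction k with
    | zero => simp
    | succ k ih =>
      have : (fE ^ (k + 1)) (c 0) = fE ((fE ^ k) (c 0)) := by
        rw [pow_succ' fE k]; rfl
      rw [this]
      calc (c (↑(k+1) : ℤ)) = c ((k : ℤ) + 1) := by norm_cast
        _ ≤ fE (c k) := (hkey k).le
        _ ≤ fE ((fE ^ k) (c 0)) := hfmono _ _ ih
  have claim2 : ∀ k : ℕ, (fE⁻¹ ^ k) (c 0) ≤ c (-(k : ℤ)) := by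
    intro k
    induction k with
    | zero => simp
    | succ k ih =>
      have hstep : fE⁻¹ (c (-(k:ℤ))) ≤ c (-(k:ℤ) - 1) := by
        have h1 : c (-(k:ℤ) - 1 + 1) ≤ fE (c (-(k:ℤ) - 1)) := by
          have := hkey (-(k:ℤ) - 1); exact this.le
        have h2 : c (-(k:ℤ)) ≤ fE (c (-(k:ℤ) - 1)) := by
          rw [show -(k:ℤ) - 1 + 1 = -(k:ℤ) by ring] at h1; exact h1
        have := hfinvmono _ _ h2
        simpa using this
      have : (fE⁻¹ ^ (k + 1)) (c 0) = fE⁻¹ ((fE⁻¹ ^ k) (c 0)) := by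
        rw [pow_succ' fE⁻¹ k]; rfl
      rw [this]
      calc fE⁻¹ ((fE⁻¹ ^ k) (c 0)) ≤ fE⁻¹ (c (-(k:ℤ))) := hfinvmono _ _ ih
        _ ≤ c (-(k:ℤ) - 1) := hstep
        _ = c (-((k:ℤ) + 1)) := by ring_nf
        _ = c (-(↑(k + 1) : ℤ)) := by norm_cast
  refine ⟨c 0, ?_, ?_, ?_⟩
  · calc c 0 < c 1 := hcadj 0
      _ < fE (c 0) := hkey 0
  · intro x
    obtain ⟨m, hm⟩ := hca x
    refine ⟨(m.toNat : ℤ), ?_⟩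
    rw [zpow_natCast]
    calc x < c m := hm
      _ ≤ c (m.toNat : ℤ) := hcmono.monotone (by omega)
      _ ≤ (fE ^ m.toNat) (c 0) := claim1 m.toNat
  · intro x
    obtain ⟨m, hm⟩ := hcb x
    refine ⟨-(((-m).toNat : ℕ) : ℤ), ?_⟩
    rw [zpow_neg, zpow_natCast, ← inv_pow]
    calc (fE⁻¹ ^ (-m).toNat) (c 0) ≤ c (-(((-m).toNat : ℕ) : ℤ)) := claim2 _
      _ ≤ c m := hcmono.monotone (by omega)
      _ < x := hm
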